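/- Let H be a complex separable Hilbert space, K a bounded linear operator on H, (f_k)_{k∈I} and (g_k)_{k∈I} Bessel sequences in H such that for every x ∈ H the family (⟨g_k, x⟩ f_k)_{k∈I} is unconditionally summable with sum Kx. Then for every x ∈ H the family (⟨f_k, x⟩ g_k)_{k∈I} is unconditionally summable with sum K*x. -/

import Mathlib

open ContinuousLinearMap

lemma bessel_finset_norm_sq_le
    {H : Type*} [NormedAddCommGroup H] [InnerProductSpace ℂ H]
    {I : Type*} (g : I → H) (D : ℝ) (hD0 : 0 ≤ D)
    (hg : ∀ x : H, Summable (fun k => ‖(inner ℂ (g k) x : ℂ)‖ ^ 2) ∧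
      ∑' k, ‖(inner ℂ (g k) x : ℂ)‖ ^ 2 ≤ D * ‖x‖ ^ 2)
    (c : I → ℂ) (F : Finset I) :
    ‖∑ k ∈ F, c k • g k‖ ^ 2 ≤ D * ∑ k ∈ F, ‖c k‖ ^ 2 := by
  classical
  set v : H := ∑ k ∈ F, c k • g k with hv
  have h1 : ‖v‖ ^ 2 ≤ ∑ k ∈ F, ‖c k‖ * ‖(inner ℂ (g k) v : ℂ)‖ := by
    have : ‖v‖ ^ 2 = RCLike.re (inner ℂ v v : ℂ) := (inner_self_eq_norm_sq v).symm
    rw [this]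
    have h2 : (inner ℂ v v : ℂ) = ∑ k ∈ F, (starRingEnd ℂ) (c k) * inner ℂ (g k) v := by
      rw [hv, sum_inner]
      exact Finset.sum_congr rfl fun k _ => inner_smul_left _ _ _
    calc RCLike.re (inner ℂ v v : ℂ) ≤ ‖(inner ℂ v v : ℂ)‖ := RCLike.re_le_norm _
      _ = ‖∑ k ∈ F, (starRingEnd ℂ) (c k) * inner ℂ (g k) v‖ := by rw [h2]
      _ ≤ ∑ k ∈ F, ‖(starRingEnd ℂ) (c k) * inner ℂ (g k) v‖ := norm_sum_le _ _
      _ = ∑ k ∈ F, ‖c k‖ * ‖(inner ℂ (g k) v : ℂ)‖ := by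
          simp [norm_mul]
  have hsumF : ∑ k ∈ F, ‖(inner ℂ (g k) v : ℂ)‖ ^ 2 ≤ D * ‖v‖ ^ 2 := by
    refine le_trans ?_ (hg v).2
    exact Summable.sum_le_tsum F (fun k _ => by positivity) (hg v).1
  have hCS : (∑ k ∈ F, ‖c k‖ * ‖(inner ℂ (g k) v : ℂ)‖) ^ 2 ≤
      (∑ k ∈ F, ‖c k‖ ^ 2) * ∑ k ∈ F, ‖(inner ℂ (g k) v : ℂ)‖ ^ 2 :=
    Finset.sum_mul_sq_le_sq_mul_sq F _ _
  rcases eq_or_ne v 0 with h0 | h0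
  · rw [h0]
    simp only [norm_zero, ne_eq, OfNat.ofNat_ne_zero, not_false_eq_true, zero_pow]
    positivity
  · have hvpos : (0:ℝ) < ‖v‖ ^ 2 := pow_pos (norm_pos_iff.2 h0) 2
    have key : ‖v‖ ^ 2 * ‖v‖ ^ 2 ≤ (D * ∑ k ∈ F, ‖c k‖ ^ 2) * ‖v‖ ^ 2 := by
      calc ‖v‖ ^ 2 * ‖v‖ ^ 2 = (‖v‖ ^ 2) ^ 2 := by ring
        _ ≤ (∑ k ∈ F, ‖c k‖ * ‖(inner ℂ (g k) v : ℂ)‖) ^ 2 := by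
            apply pow_le_pow_left₀ (by positivity) h1
        _ ≤ (∑ k ∈ F, ‖c k‖ ^ 2) * ∑ k ∈ F, ‖(inner ℂ (g k) v : ℂ)‖ ^ 2 := hCS
        _ ≤ (∑ k ∈ F, ‖c k‖ ^ 2) * (D * ‖v‖ ^ 2) := by
            apply mul_le_mul_of_nonneg_left hsumF (by positivity)
        _ = (D * ∑ k ∈ F, ‖c k‖ ^ 2) * ‖v‖ ^ 2 := by ring
    exact le_of_mul_le_mul_right key hvpos

/-- if the Bessel sequences `(f k)` and `(g k)` satisfy
`∑ₖ ⟨g k, x⟩ • f k = K x` unconditionally for every `x`, then they also satisfy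
`∑ₖ ⟨f k, x⟩ • g k = K* x` unconditionally for every `x`. -/
theorem K_dual_adjoint_reconstruction
    {H : Type*} [NormedAddCommGroup H] [InnerProductSpace ℂ H]
    [CompleteSpace H] [TopologicalSpace.SeparableSpace H]
    {I : Type*} [Countable I]
    (K : H →L[ℂ] H) (f g : I → H)
    (hf : ∃ B : ℝ, 0 < B ∧ ∀ x : H, Summable (fun k => ‖(inner ℂ (f k) x : ℂ)‖ ^ 2) ∧
      ∑' k, ‖(inner ℂ (f k) x : ℂ)‖ ^ 2 ≤ B * ‖x‖ ^ 2)
    (hg : ∃ D : ℝ, 0 < D ∧ ∀ x : H, Summable (fun k => ‖(inner ℂ (g k) x : ℂ)‖ ^ 2) ∧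
      ∑' k, ‖(inner ℂ (g k) x : ℂ)‖ ^ 2 ≤ D * ‖x‖ ^ 2)
    (hdual : ∀ x : H, HasSum (fun k => (inner ℂ (g k) x : ℂ) • f k) (K x)) :
    ∀ x : H, HasSum (fun k => (inner ℂ (f k) x : ℂ) • g k) ((adjoint K) x) := by
  obtain ⟨B, hB, hf⟩ := hf
  obtain ⟨D, hD, hg⟩ := hg
  intro x
  set c : I → ℂ := fun k => inner ℂ (f k) x with hc
  -- Summability
  have hsum : Summable (fun k => c k • g k) := by
    rw [summable_iff_vanishing_norm]
    intro ε hε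
    have hc2 : Summable (fun k => ‖c k‖ ^ 2) := (hf x).1
    obtain ⟨s, hs⟩ := summable_iff_vanishing_norm.1 hc2 (ε ^ 2 / D) (by positivity)
    refine ⟨s, fun t ht => ?_⟩
    have h1 : ‖∑ k ∈ t, c k • g k‖ ^ 2 ≤ D * ∑ k ∈ t, ‖c k‖ ^ 2 :=
      bessel_finset_norm_sq_le g D hD.le hg c t
    have h2 : ∑ k ∈ t, ‖c k‖ ^ 2 < ε ^ 2 / D := by
      have := hs t ht
      calc ∑ k ∈ t, ‖c k‖ ^ 2 ≤ ‖∑ k ∈ t, ‖c k‖ ^ 2‖ := le_abs_self _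
        _ < ε ^ 2 / D := this
    have h3 : ‖∑ k ∈ t, c k • g k‖ ^ 2 < ε ^ 2 := by
      calc ‖∑ k ∈ t, c k • g k‖ ^ 2 ≤ D * ∑ k ∈ t, ‖c k‖ ^ 2 := h1
        _ < D * (ε ^ 2 / D) := by exact mul_lt_mul_of_pos_left h2 hD
        _ = ε ^ 2 := by field_simp
    exact lt_of_pow_lt_pow_left₀ 2 hε.le h3
  obtain ⟨S, hS⟩ := hsum
  -- Identify the sum
  have hSeq : S = (adjoint K) x := by
    apply ext_inner_left ℂ
    intro y
    have h1 : HasSum (fun k => (inner ℂ y (c k • g k) : ℂ)) (inner ℂ y S) :=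
      (innerSL ℂ y).hasSum hS
    have h2 : HasSum (fun k => ((inner ℂ (g k) y : ℂ) • f k)) (K y) := hdual y
    have h3 : HasSum (fun k => (inner ℂ x ((inner ℂ (g k) y : ℂ) • f k) : ℂ)) (inner ℂ x (K y)) :=
      (innerSL ℂ x).hasSum h2
    have h4 : HasSum (fun k => (starRingEnd ℂ) (inner ℂ x ((inner ℂ (g k) y : ℂ) • f k) : ℂ))
        ((starRingEnd ℂ) (inner ℂ x (K y) : ℂ)) := (RCLike.hasSum_conj' ℂ).2 h3
    have heq : (fun k => (inner ℂ y (c k • g k) : ℂ)) =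
        (fun k => (starRingEnd ℂ) (inner ℂ x ((inner ℂ (g k) y : ℂ) • f k) : ℂ)) := by
      funext k
      simp only [inner_smul_right, map_mul, inner_conj_symm, hc]
      ring
    rw [heq] at h1
    have : (inner ℂ y S : ℂ) = (starRingEnd ℂ) (inner ℂ x (K y) : ℂ) := h1.unique h4
    rw [this, inner_conj_symm, ← adjoint_inner_right K]
  rw [← hSeq]
  exact hS
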